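/- Let λ ∈ ℂ with λ ≠ 0 and let a = (a_1, …, a_m) ∈ ℂ^m satisfy M a = λ² a (viewing M as a complex matrix). Then there exists a unique group homomorphism ρ_λ : Γ → SL(2,ℂ) with ρ_λ(γ_i) = [[1, a_i],[0, 1]] for all 1 ≤ i ≤ m and ρ_λ(τ) = [[λ, 0],[0, λ^{−1}]]; moreover ρ_λ is reducible, with every element of its image preserving the line in ℂ² spanned by (1,0). -/

import Mathlib

open Matrix

set_option linter.unnecessarySeqFocus false


noncomputable def uM (c : ℂ) : Matrix.SpecialLinearGroup (Fin 2) ℂ :=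
  ⟨!![1, c; 0, 1], by simp [Matrix.det_fin_two_of]⟩

@[simp] lemma uM_coe (c : ℂ) : (uM c : Matrix (Fin 2) (Fin 2) ℂ) = !![1, c; 0, 1] := rfl

lemma uM_mul (b c : ℂ) : uM b * uM c = uM (b + c) := by
  apply Subtype.ext
  show (!![1, b; 0, 1] : Matrix (Fin 2) (Fin 2) ℂ) * !![1, c; 0, 1] = !![1, b + c; 0, 1]
  rw [Matrix.mul_fin_two]
  ext i j
  fin_cases i <;> fin_cases j <;> simp <;> ring

noncomputable def uHom : Multiplicative ℂ →* Matrix.SpecialLinearGroup (Fin 2) ℂ where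
  toFun c := uM (Multiplicative.toAdd c)
  map_one' := by
    apply Subtype.ext
    show (!![1, Multiplicative.toAdd (1 : Multiplicative ℂ); 0, 1] : Matrix (Fin 2) (Fin 2) ℂ) = _
    simp [Matrix.one_fin_two]
  map_mul' x y := by rw [uM_mul, ← toAdd_mul]

@[simp] lemma uHom_apply (c : Multiplicative ℂ) : uHom c = uM (Multiplicative.toAdd c) := rfl

noncomputable def dM (lam : ℂ) (h : lam ≠ 0) : Matrix.SpecialLinearGroup (Fin 2) ℂ :=
  ⟨!![lam, 0; 0, lam⁻¹], by simp [Matrix.det_fin_two_of, mul_inv_cancel₀ h]⟩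

lemma dM_mul_uM (lam : ℂ) (h : lam ≠ 0) (c : ℂ) :
    dM lam h * uM c = uM (lam ^ 2 * c) * dM lam h := by
  apply Subtype.ext
  show (!![lam, 0; 0, lam⁻¹] : Matrix (Fin 2) (Fin 2) ℂ) * !![1, c; 0, 1]
      = !![1, lam ^ 2 * c; 0, 1] * !![lam, 0; 0, lam⁻¹]
  rw [Matrix.mul_fin_two, Matrix.mul_fin_two]
  ext i j
  fin_cases i <;> fin_cases j <;> field_simp <;> ring



/-- Exponent sum of the generator `j` in the word `w` of the free group. -/
def expSum {m : ℕ} (w : FreeGroup (Fin m)) (j : Fin m) : ℤ :=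
  Multiplicative.toAdd
    ((FreeGroup.lift fun i => Multiplicative.ofAdd (if i = j then (1 : ℤ) else 0)) w)

lemma expSum_mul {m : ℕ} (x y : FreeGroup (Fin m)) (j : Fin m) :
    expSum (x * y) j = expSum x j + expSum y j := by
  unfold expSum; rw [_root_.map_mul]; simp

lemma expSum_inv {m : ℕ} (x : FreeGroup (Fin m)) (j : Fin m) :
    expSum x⁻¹ j = - expSum x j := by
  unfold expSum; rw [_root_.map_inv]; simp

lemma expSum_one {m : ℕ} (j : Fin m) : expSum (1 : FreeGroup (Fin m)) j = 0 := by
  unfold expSum; rw [_root_.map_one]; simp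

lemma expSum_of {m : ℕ} (i j : Fin m) :
    expSum (FreeGroup.of i) j = if i = j then 1 else 0 := by
  unfold expSum; rw [FreeGroup.lift_apply_of]; simp

/-- The matrix of the map induced by the automorphism `θ` on the abelianization `ℤ^m`
of the free group: `M i j` is the exponent sum of `γ_j` in `θ(γ_i)`. -/
def abMatrix {m : ℕ} (θ : FreeGroup (Fin m) ≃* FreeGroup (Fin m)) :
    Matrix (Fin m) (Fin m) ℤ :=
  Matrix.of fun i j => expSum (θ (FreeGroup.of i)) j

/-- The semidirect product `Γ = F ⋊_θ ℤ`, in which the generator `τ` of the `ℤ` factor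
acts by `θ`. -/
abbrev Gam {m : ℕ} (θ : FreeGroup (Fin m) ≃* FreeGroup (Fin m)) :=
  FreeGroup (Fin m) ⋊[zpowersHom (MulAut (FreeGroup (Fin m))) θ] Multiplicative ℤ

/-- Given `λ ≠ 0` and `a ∈ ℂ^m` with `M a = λ² a` (for `M` the abelianization matrix of
`θ`), there is a unique homomorphism `ρ_λ : Γ → SL(2,ℂ)` with `ρ_λ(γ_i) = [[1,a_i],[0,1]]`
and `ρ_λ(τ) = [[λ,0],[0,λ⁻¹]]`; moreover it is reducible, every element of its image
preserving the line spanned by `(1,0)`. -/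
theorem exists_unique_rho_lambda (m : ℕ) (hm : 1 ≤ m)
    (θ : FreeGroup (Fin m) ≃* FreeGroup (Fin m)) (lam : ℂ) (hlam : lam ≠ 0)
    (a : Fin m → ℂ)
    (hMa : ((abMatrix θ).map (Int.cast : ℤ → ℂ)).mulVec a = lam ^ 2 • a) :
    (∃! ρ : Gam θ →* Matrix.SpecialLinearGroup (Fin 2) ℂ,
      (∀ i : Fin m,
        (ρ (SemidirectProduct.inl (FreeGroup.of i)) : Matrix (Fin 2) (Fin 2) ℂ) =
          !![1, a i; 0, 1]) ∧
      (ρ (SemidirectProduct.inr (Multiplicative.ofAdd 1)) : Matrix (Fin 2) (Fin 2) ℂ) =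
        !![lam, 0; 0, lam⁻¹]) ∧
    (∀ ρ : Gam θ →* Matrix.SpecialLinearGroup (Fin 2) ℂ,
      ((∀ i : Fin m,
        (ρ (SemidirectProduct.inl (FreeGroup.of i)) : Matrix (Fin 2) (Fin 2) ℂ) =
          !![1, a i; 0, 1]) ∧
      (ρ (SemidirectProduct.inr (Multiplicative.ofAdd 1)) : Matrix (Fin 2) (Fin 2) ℂ) =
        !![lam, 0; 0, lam⁻¹]) →
      ∀ (g : Gam θ) (w : Fin 2 → ℂ), w ∈ Submodule.span ℂ {![(1 : ℂ), 0]} →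
        ((ρ g : Matrix (Fin 2) (Fin 2) ℂ)).mulVec w ∈ Submodule.span ℂ {![(1 : ℂ), 0]}) := by
  classical
  set T : Matrix.SpecialLinearGroup (Fin 2) ℂ := dM lam hlam with hT
  have hconj : ∀ c : ℂ, T * uM c = uM (lam ^ 2 * c) * T := dM_mul_uM lam hlam
  set f : FreeGroup (Fin m) →* Multiplicative ℂ :=
    FreeGroup.lift (fun i => Multiplicative.ofAdd (a i)) with hf
  set Φ : FreeGroup (Fin m) →* Matrix.SpecialLinearGroup (Fin 2) ℂ := uHom.comp f with hΦ
  set Ψ : Multiplicative ℤ →* Matrix.SpecialLinearGroup (Fin 2) ℂ :=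
    zpowersHom _ T with hΨ
  have hfval : ∀ w : FreeGroup (Fin m),
      Multiplicative.toAdd (f w) = ∑ j, (expSum w j : ℂ) * a j := by
    intro w
    have hpure : ∀ i : Fin m, (pure i : FreeGroup (Fin m)) = FreeGroup.of i := fun _ => rfl
    refine FreeGroup.induction_on w ?_ (fun i => ?_) (fun i hi => ?_) (fun x y hx hy => ?_)
    · rw [_root_.map_one]
      simp [expSum_one]
    · rw [hf, FreeGroup.lift_apply_of]
      simp [expSum_of]
    · rw [_root_.map_inv, toAdd_inv, hi, ← Finset.sum_neg_distrib]
      congr 1; funext j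
      push_cast [expSum_inv]
      ring
    · rw [_root_.map_mul, toAdd_mul, hx, hy]
      rw [← Finset.sum_add_distrib]
      congr 1; funext j
      push_cast [expSum_mul]
      ring
  have hΦof : ∀ i, Φ (FreeGroup.of i) = uM (a i) := by
    intro i
    show uHom (f (FreeGroup.of i)) = _
    rw [hf, FreeGroup.lift_apply_of]
    simp
  have hθval : ∀ i, Multiplicative.toAdd (f (θ (FreeGroup.of i))) = lam ^ 2 * a i := by
    intro i
    rw [hfval]
    have := congrFun hMa i
    simpa [Matrix.mulVec, dotProduct, abMatrix, Matrix.map_apply] using this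
  have key1 : ∀ x, Φ (θ x) = T * Φ x * T⁻¹ := by
    have h : Φ.comp θ.toMonoidHom = (MulAut.conj T).toMonoidHom.comp Φ := by
      apply FreeGroup.ext_hom
      intro i
      simp only [MonoidHom.comp_apply, MulEquiv.coe_toMonoidHom, MulAut.conj_apply]
      have hL : Φ (θ (FreeGroup.of i)) = uM (lam ^ 2 * a i) := by
        show uHom (f (θ (FreeGroup.of i))) = _
        rw [uHom_apply, hθval]
      rw [hL, hΦof, hconj (a i)]
      group
    intro x
    simpa using DFunLike.congr_fun h x
  have key1' : ∀ x, Φ ((θ : MulAut (FreeGroup (Fin m)))⁻¹ x) = T⁻¹ * Φ x * T := by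
    intro x
    have h2 := key1 (((θ : MulAut (FreeGroup (Fin m)))⁻¹) x)
    have h3 : θ (((θ : MulAut (FreeGroup (Fin m)))⁻¹) x) = x := by
      show ((θ : MulAut (FreeGroup (Fin m))) * (θ : MulAut (FreeGroup (Fin m)))⁻¹) x = x
      rw [mul_inv_cancel]; rfl
    rw [h3] at h2
    rw [h2]; group
  have key2 : ∀ (n : ℤ) (x : FreeGroup (Fin m)),
      Φ (((θ : MulAut (FreeGroup (Fin m))) ^ n) x) = T ^ n * Φ x * (T ^ n)⁻¹ := by
    intro n
    induction n using Int.induction_on with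
    | zero => simp
    | succ k ih =>
      intro x
      have h1 : (((θ : MulAut (FreeGroup (Fin m))) ^ ((k : ℤ) + 1)) x)
          = ((θ : MulAut (FreeGroup (Fin m))) ^ (k : ℤ)) (θ x) := by
        rw [_root_.zpow_add_one]; rfl
      rw [h1, ih, key1]
      group
    | pred k ih =>
      intro x
      have h1 : (((θ : MulAut (FreeGroup (Fin m))) ^ (-(k : ℤ) - 1)) x)
          = ((θ : MulAut (FreeGroup (Fin m))) ^ (-(k : ℤ)))
              (((θ : MulAut (FreeGroup (Fin m)))⁻¹) x) := by
        rw [_root_.zpow_sub_one]; rfl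
      rw [h1, ih, key1']
      group
  have hcompat : ∀ g : Multiplicative ℤ,
      Φ.comp ((zpowersHom (MulAut (FreeGroup (Fin m))) θ g).toMonoidHom)
        = (MulAut.conj (Ψ g)).toMonoidHom.comp Φ := by
    intro g
    apply MonoidHom.ext
    intro x
    simp only [MonoidHom.comp_apply, MulEquiv.coe_toMonoidHom, MulAut.conj_apply, hΨ,
      zpowersHom_apply]
    exact key2 (Multiplicative.toAdd g) x
  set ρ₀ : Gam θ →* Matrix.SpecialLinearGroup (Fin 2) ℂ :=
    SemidirectProduct.lift Φ Ψ hcompat with hρ₀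
  have hρ1 : ∀ i : Fin m,
      (ρ₀ (SemidirectProduct.inl (FreeGroup.of i)) : Matrix (Fin 2) (Fin 2) ℂ) =
        !![1, a i; 0, 1] := by
    intro i
    rw [hρ₀, SemidirectProduct.lift_inl, hΦof]
    rfl
  have hρ2 : (ρ₀ (SemidirectProduct.inr (Multiplicative.ofAdd 1)) : Matrix (Fin 2) (Fin 2) ℂ) =
      !![lam, 0; 0, lam⁻¹] := by
    rw [hρ₀, SemidirectProduct.lift_inr]
    show ((T ^ (1 : ℤ) : Matrix.SpecialLinearGroup (Fin 2) ℂ) : Matrix (Fin 2) (Fin 2) ℂ) = _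
    rw [zpow_one]
    rfl
  constructor
  · refine ⟨ρ₀, ⟨hρ1, hρ2⟩, ?_⟩
    intro ρ' ⟨h1, h2⟩
    apply SemidirectProduct.hom_ext
    · apply FreeGroup.ext_hom
      intro i
      apply Subtype.ext
      show (ρ' (SemidirectProduct.inl (FreeGroup.of i)) : Matrix (Fin 2) (Fin 2) ℂ)
        = (ρ₀ (SemidirectProduct.inl (FreeGroup.of i)) : Matrix (Fin 2) (Fin 2) ℂ)
      rw [h1 i, hρ1 i]
    · apply MonoidHom.ext_mint
      apply Subtype.ext
      show (ρ' (SemidirectProduct.inr (Multiplicative.ofAdd 1)) : Matrix (Fin 2) (Fin 2) ℂ)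
        = (ρ₀ (SemidirectProduct.inr (Multiplicative.ofAdd 1)) : Matrix (Fin 2) (Fin 2) ℂ)
      rw [h2, hρ2]
  · rintro ρ' ⟨h1, h2⟩ g w hw
    have Pmul : ∀ {g h : Gam θ}, (ρ' g : Matrix (Fin 2) (Fin 2) ℂ) 1 0 = 0 →
        (ρ' h : Matrix (Fin 2) (Fin 2) ℂ) 1 0 = 0 →
        (ρ' (g * h) : Matrix (Fin 2) (Fin 2) ℂ) 1 0 = 0 := by
      intro g h hg hh
      rw [_root_.map_mul]
      show ((ρ' g : Matrix (Fin 2) (Fin 2) ℂ) * (ρ' h : Matrix (Fin 2) (Fin 2) ℂ)) 1 0 = 0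
      rw [Matrix.mul_apply, Fin.sum_univ_two, hg, hh]
      ring
    have Pinv : ∀ {g : Gam θ}, (ρ' g : Matrix (Fin 2) (Fin 2) ℂ) 1 0 = 0 →
        (ρ' g⁻¹ : Matrix (Fin 2) (Fin 2) ℂ) 1 0 = 0 := by
      intro g hg
      rw [_root_.map_inv]
      show (Matrix.adjugate (ρ' g : Matrix (Fin 2) (Fin 2) ℂ)) 1 0 = 0
      rw [Matrix.adjugate_fin_two]
      simp [hg]
    have Pone : (ρ' (1 : Gam θ) : Matrix (Fin 2) (Fin 2) ℂ) 1 0 = 0 := by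
      rw [_root_.map_one]
      show (1 : Matrix (Fin 2) (Fin 2) ℂ) 1 0 = 0
      simp [Matrix.one_apply]
    have Pinl : ∀ x : FreeGroup (Fin m),
        (ρ' (SemidirectProduct.inl x) : Matrix (Fin 2) (Fin 2) ℂ) 1 0 = 0 := by
      intro x
      have hpure : ∀ i : Fin m, (pure i : FreeGroup (Fin m)) = FreeGroup.of i := fun _ => rfl
      refine FreeGroup.induction_on x ?_ (fun i => ?_) (fun i hi => ?_) (fun x y hx hy => ?_)
      · rw [_root_.map_one]; exact Pone
      · rw [h1 i]; simp
      · rw [_root_.map_inv]; exact Pinv hi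
      · rw [_root_.map_mul]; exact Pmul hx hy
    have Pinr1 : (ρ' (SemidirectProduct.inr (Multiplicative.ofAdd (1 : ℤ))) :
        Matrix (Fin 2) (Fin 2) ℂ) 1 0 = 0 := by
      rw [h2]; simp
    have Pinr : ∀ z : Multiplicative ℤ,
        (ρ' (SemidirectProduct.inr z) : Matrix (Fin 2) (Fin 2) ℂ) 1 0 = 0 := by
      have key : ∀ n : ℤ,
          (ρ' (SemidirectProduct.inr (Multiplicative.ofAdd n)) : Matrix (Fin 2) (Fin 2) ℂ) 1 0
            = 0 := by
        intro n
        induction n using Int.induction_on with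
        | zero =>
          have : Multiplicative.ofAdd (0 : ℤ) = 1 := rfl
          rw [this, _root_.map_one]; exact Pone
        | succ k ih =>
          have : Multiplicative.ofAdd ((k : ℤ) + 1)
              = Multiplicative.ofAdd (k : ℤ) * Multiplicative.ofAdd (1 : ℤ) := rfl
          rw [this, _root_.map_mul]
          exact Pmul ih Pinr1
        | pred k ih =>
          have : Multiplicative.ofAdd (-(k : ℤ) - 1)
              = Multiplicative.ofAdd (-(k : ℤ)) * (Multiplicative.ofAdd (1 : ℤ))⁻¹ := rfl
          rw [this, _root_.map_mul, _root_.map_inv]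
          exact Pmul ih (Pinv Pinr1)
      intro z
      simpa using key (Multiplicative.toAdd z)
    have Pg : (ρ' g : Matrix (Fin 2) (Fin 2) ℂ) 1 0 = 0 := by
      have := Pmul (Pinl g.left) (Pinr g.right)
      rwa [SemidirectProduct.inl_left_mul_inr_right] at this
    rcases Submodule.mem_span_singleton.mp hw with ⟨c, rfl⟩
    rw [Matrix.mulVec_smul]
    apply Submodule.smul_mem
    have hv : (ρ' g : Matrix (Fin 2) (Fin 2) ℂ).mulVec ![1, 0]
        = (ρ' g : Matrix (Fin 2) (Fin 2) ℂ) 0 0 • ![1, 0] := by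
      funext k
      fin_cases k <;>
        simp [Matrix.mulVec, dotProduct, Fin.sum_univ_two, Pg]
    rw [hv]
    exact Submodule.smul_mem _ _ (Submodule.mem_span_singleton_self _)
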